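/- Let n ≥ 2, let Ω^i be a bounded open subset of ℝ^n, let S = ∂Ω^i, and assume σ_S is a finite measure. Let ν : ℝ^n → ℝ^n and θ : ℝ^n → ℝ be continuous, let v ∈ ℝ^n be a fixed vector, let x₀ ∈ ℝ^n ∖ {0}, and let k ∈ ℕ. For ε with |ε|·sup_{s∈S}‖s‖ < ‖x₀‖, define F(ε) = −v · ∇_x [ x ↦ ∫ ν(s)·∇G_n(x − ε·s)·θ(s) dσ_S(s) ](x₀), the negative of the directional derivative along v, at the point x₀, of the inner integral as a function of x. Then the k-th derivative of F at ε = 0 equals (−1)^{k+1} · Σ_{β ∈ ℕ^n, |β| = k} (k!/β!) · v · ∇_x [ x ↦ (∇D^β G_n)(x) · c_β ](x₀), where c_β = ∫ ν(s)·s^β·θ(s) dσ_S(s) is an ℝ^n-valued Bochner integral and · denotes the Euclidean inner product. -/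

import Mathlib

open MeasureTheory RealInnerProductSpace Pointwise

/-- The measure `σ_S`: the `(n-1)`-dimensional Hausdorff measure on `ℝⁿ` restricted to `S`. -/
noncomputable def bdryMeasure (n : ℕ) (S : Set (EuclideanSpace ℝ (Fin n))) :
    Measure (EuclideanSpace ℝ (Fin n)) := (μH[(n : ℝ) - 1]).restrict S

/-- `s_n`: the `(n-1)`-dimensional Hausdorff measure of the unit sphere of `ℝⁿ`. -/
noncomputable def sphereArea (n : ℕ) : ℝ :=
  (μH[(n : ℝ) - 1] (Metric.sphere (0 : EuclideanSpace ℝ (Fin n)) 1)).toReal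

/-- The fundamental solution `G_n` of `-Δ` in `ℝⁿ`. -/
noncomputable def fundSol (n : ℕ) (x : EuclideanSpace ℝ (Fin n)) : ℝ :=
  if n = 2 then -(1 / (2 * Real.pi)) * Real.log ‖x‖
  else (1 / (((n : ℝ) - 2) * sphereArea n)) * ‖x‖ ^ ((2 : ℝ) - (n : ℝ))

/-- The partial derivative in the `i`-th coordinate direction. -/
noncomputable def pderiv' {n : ℕ} (i : Fin n) (F : EuclideanSpace ℝ (Fin n) → ℝ) :
    EuclideanSpace ℝ (Fin n) → ℝ :=
  fun x => lineDeriv ℝ F x (EuclideanSpace.single i 1)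

/-- The iterated partial derivative `D^β F` of multi-index `β`. -/
noncomputable def multiDeriv {n : ℕ} (β : Fin n → ℕ) (F : EuclideanSpace ℝ (Fin n) → ℝ) :
    EuclideanSpace ℝ (Fin n) → ℝ :=
  (List.finRange n).foldr (fun i G => (pderiv' i)^[β i] G) F


open scoped ContDiff

namespace Stmt13

variable {n : ℕ}

lemma fundSol_contDiffOn (n : ℕ) :
    ContDiffOn ℝ ∞ (fundSol n) {x : EuclideanSpace ℝ (Fin n) | x ≠ 0} := by
  intro x hx
  have hx' : x ≠ 0 := hx
  have hnorm : ‖x‖ ≠ 0 := norm_ne_zero_iff.mpr hx'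
  apply ContDiffAt.contDiffWithinAt
  by_cases h2 : n = 2
  · have : fundSol n = fun x : EuclideanSpace ℝ (Fin n) =>
        -(1 / (2 * Real.pi)) * Real.log ‖x‖ := by
      funext y; simp [fundSol, h2]
    rw [this]
    exact contDiffAt_const.mul ((contDiffAt_norm (𝕜 := ℝ) hx').log hnorm)
  · have : fundSol n = fun x : EuclideanSpace ℝ (Fin n) =>
        (1 / (((n : ℝ) - 2) * sphereArea n)) * ‖x‖ ^ ((2 : ℝ) - (n : ℝ)) := by
      funext y; simp [fundSol, h2]
    rw [this]
    exact contDiffAt_const.mul ((contDiffAt_norm (𝕜 := ℝ) hx').rpow_const_of_ne hnorm)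

lemma euclid_decomp {n : ℕ} (s : EuclideanSpace ℝ (Fin n)) :
    ∑ i, s i • EuclideanSpace.single i (1:ℝ) = s := by
  ext j
  have : (∑ i, s i • EuclideanSpace.single i (1:ℝ)) j
      = ∑ i, (s i • EuclideanSpace.single i (1:ℝ)) j := by
    rw [WithLp.ofLp_sum, Finset.sum_apply]
  rw [this]
  simp [EuclideanSpace.single_apply]

lemma fderiv_expand {n : ℕ} (h : EuclideanSpace ℝ (Fin n) → ℝ) (x s : EuclideanSpace ℝ (Fin n)) :
    fderiv ℝ h x s = ∑ i, s i * fderiv ℝ h x (EuclideanSpace.single i 1) := by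
  conv_lhs => rw [← euclid_decomp s]
  rw [map_sum]
  simp [smul_eq_mul]

lemma inner_gradient {n : ℕ} (h : EuclideanSpace ℝ (Fin n) → ℝ) (x y : EuclideanSpace ℝ (Fin n)) :
    ⟪gradient h x, y⟫ = fderiv ℝ h x y := by
  rw [gradient]
  exact InnerProductSpace.toDual_symm_apply

lemma annulus_compact {n : ℕ} (r R' : ℝ) :
    IsCompact {y : EuclideanSpace ℝ (Fin n) | r ≤ ‖y‖ ∧ ‖y‖ ≤ R'} := by
  have : {y : EuclideanSpace ℝ (Fin n) | r ≤ ‖y‖ ∧ ‖y‖ ≤ R'}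
      = Metric.closedBall 0 R' ∩ (Metric.ball 0 r)ᶜ := by
    ext y
    simp [Metric.mem_closedBall, Metric.mem_ball, dist_zero_right, and_comm, not_lt]
  rw [this]
  exact (isCompact_closedBall 0 R').inter_right Metric.isOpen_ball.isClosed_compl

lemma isOpen_ne_zero {n : ℕ} : IsOpen {x : EuclideanSpace ℝ (Fin n) | x ≠ 0} :=
  isOpen_compl_singleton

/-- directional derivative operator -/
noncomputable def DD (w : EuclideanSpace ℝ (Fin n)) (h : EuclideanSpace ℝ (Fin n) → ℝ) :
    EuclideanSpace ℝ (Fin n) → ℝ := fun x => fderiv ℝ h x w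

lemma DD_contDiffOn {U : Set (EuclideanSpace ℝ (Fin n))} (hU : IsOpen U) {h : EuclideanSpace ℝ (Fin n) → ℝ}
    (hh : ContDiffOn ℝ ∞ h U) (w : EuclideanSpace ℝ (Fin n)) : ContDiffOn ℝ ∞ (DD w h) U := by
  have h1 : ContDiffOn ℝ ∞ (fderiv ℝ h) U := hh.fderiv_of_isOpen hU (by simp)
  have h2 : ContDiff ℝ ∞ (fun L : EuclideanSpace ℝ (Fin n) →L[ℝ] ℝ => L w) :=
    (ContinuousLinearMap.apply ℝ ℝ w).contDiff
  exact h2.comp_contDiffOn h1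

lemma DD_measurable (w : EuclideanSpace ℝ (Fin n)) (h : EuclideanSpace ℝ (Fin n) → ℝ) :
    Measurable (DD w h) := measurable_fderiv_apply_const ℝ h w

lemma DD_congr_on {U : Set (EuclideanSpace ℝ (Fin n))} (hU : IsOpen U)
    {f g : EuclideanSpace ℝ (Fin n) → ℝ} (hfg : ∀ y ∈ U, f y = g y) {x} (hx : x ∈ U) (w) :
    DD w f x = DD w g x := by
  have : f =ᶠ[nhds x] g := by
    filter_upwards [hU.mem_nhds hx] with y hy using hfg y hy
  simp only [DD, this.fderiv_eq]

lemma DD_comm {U : Set (EuclideanSpace ℝ (Fin n))} (hU : IsOpen U) {h : EuclideanSpace ℝ (Fin n) → ℝ}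
    (hh : ContDiffOn ℝ ∞ h U) {x} (hx : x ∈ U) (u w : EuclideanSpace ℝ (Fin n)) :
    DD u (DD w h) x = DD w (DD u h) x := by
  have hca : ContDiffAt ℝ ∞ h x := hh.contDiffAt (hU.mem_nhds hx)
  have hd : ContDiffOn ℝ ∞ (fderiv ℝ h) U := hh.fderiv_of_isOpen hU (by simp)
  have key : ∀ a b : EuclideanSpace ℝ (Fin n), DD a (DD b h) x = fderiv ℝ (fderiv ℝ h) x a b := by
    intro a b
    have hd2 : DifferentiableAt ℝ (fderiv ℝ h) x :=
      (hd.contDiffAt (hU.mem_nhds hx)).differentiableAt (by simp)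
    have : HasFDerivAt (fun y => fderiv ℝ h y b)
        ((ContinuousLinearMap.apply ℝ ℝ b).comp (fderiv ℝ (fderiv ℝ h) x)) x :=
      (ContinuousLinearMap.apply ℝ ℝ b).hasFDerivAt.comp x hd2.hasFDerivAt
    show fderiv ℝ (fun y => fderiv ℝ h y b) x a = _
    rw [this.fderiv]
    rfl
  rw [key, key]
  exact (hca.isSymmSndFDerivAt (by simp only [minSmoothness_of_isRCLikeNormedField]; exact WithTop.coe_le_coe.mpr (le_top : (2:ℕ∞) ≤ ⊤))) u w


noncomputable def foldrD (β : Fin n → ℕ) (l : List (Fin n)) (h : EuclideanSpace ℝ (Fin n) → ℝ) :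
    EuclideanSpace ℝ (Fin n) → ℝ :=
  l.foldr (fun i G => (DD (EuclideanSpace.single i 1))^[β i] G) h

noncomputable def Dm (β : Fin n → ℕ) (h : EuclideanSpace ℝ (Fin n) → ℝ) :
    EuclideanSpace ℝ (Fin n) → ℝ := foldrD β (List.finRange n) h

variable {U : Set (EuclideanSpace ℝ (Fin n))}

lemma iter_contDiffOn (hU : IsOpen U) {h : EuclideanSpace ℝ (Fin n) → ℝ} (hh : ContDiffOn ℝ ∞ h U)
    (w : EuclideanSpace ℝ (Fin n)) (m : ℕ) : ContDiffOn ℝ ∞ ((DD w)^[m] h) U := by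
  induction m generalizing h with
  | zero => exact hh
  | succ m ih =>
    rw [Function.iterate_succ_apply]
    exact ih (DD_contDiffOn hU hh w)

lemma iter_congr_on (hU : IsOpen U) {f g : EuclideanSpace ℝ (Fin n) → ℝ} (hfg : ∀ y ∈ U, f y = g y)
    (w : EuclideanSpace ℝ (Fin n)) (m : ℕ) : ∀ y ∈ U, (DD w)^[m] f y = (DD w)^[m] g y := by
  induction m with
  | zero => exact hfg
  | succ m ih =>
    intro y hy
    rw [Function.iterate_succ_apply', Function.iterate_succ_apply']
    exact DD_congr_on hU ih hy w

lemma iter_comm (hU : IsOpen U) {h : EuclideanSpace ℝ (Fin n) → ℝ} (hh : ContDiffOn ℝ ∞ h U)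
    (u w : EuclideanSpace ℝ (Fin n)) (m : ℕ) :
    ∀ x ∈ U, DD u ((DD w)^[m] h) x = (DD w)^[m] (DD u h) x := by
  induction m generalizing h with
  | zero => intro x _; rfl
  | succ m ih =>
    intro x hx
    rw [Function.iterate_succ_apply, Function.iterate_succ_apply]
    rw [ih (DD_contDiffOn hU hh w) x hx]
    exact iter_congr_on hU (fun y hy => DD_comm hU hh hy u w) w m x hx

lemma foldrD_contDiffOn (hU : IsOpen U) {h : EuclideanSpace ℝ (Fin n) → ℝ} (hh : ContDiffOn ℝ ∞ h U)
    (β : Fin n → ℕ) (l : List (Fin n)) : ContDiffOn ℝ ∞ (foldrD β l h) U := by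
  induction l with
  | nil => exact hh
  | cons i l ih => exact iter_contDiffOn hU ih _ _

lemma foldrD_congr_on (hU : IsOpen U) {f g : EuclideanSpace ℝ (Fin n) → ℝ} (hfg : ∀ y ∈ U, f y = g y)
    (β : Fin n → ℕ) (l : List (Fin n)) : ∀ y ∈ U, foldrD β l f y = foldrD β l g y := by
  induction l with
  | nil => exact hfg
  | cons i l ih => exact iter_congr_on hU ih _ _

lemma foldrD_comm (hU : IsOpen U) {h : EuclideanSpace ℝ (Fin n) → ℝ} (hh : ContDiffOn ℝ ∞ h U)
    (u : EuclideanSpace ℝ (Fin n)) (β : Fin n → ℕ) (l : List (Fin n)) :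
    ∀ x ∈ U, DD u (foldrD β l h) x = foldrD β l (DD u h) x := by
  induction l with
  | nil => intro x _; rfl
  | cons i l ih =>
    intro x hx
    show DD u ((DD _)^[β i] (foldrD β l h)) x = (DD _)^[β i] (foldrD β l (DD u h)) x
    rw [iter_comm hU (foldrD_contDiffOn hU hh β l) u _ (β i) x hx]
    exact iter_congr_on hU ih _ (β i) x hx

lemma foldrD_congr_β {β γ : Fin n → ℕ} (h : EuclideanSpace ℝ (Fin n) → ℝ) (l : List (Fin n))
    (hβγ : ∀ i ∈ l, β i = γ i) : foldrD β l h = foldrD γ l h := by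
  induction l with
  | nil => rfl
  | cons i l ih =>
    show (DD _)^[β i] (foldrD β l h) = (DD _)^[γ i] (foldrD γ l h)
    rw [hβγ i List.mem_cons_self, ih (fun j hj => hβγ j (List.mem_cons_of_mem _ hj))]

lemma foldrD_insert (hU : IsOpen U) {h : EuclideanSpace ℝ (Fin n) → ℝ} (hh : ContDiffOn ℝ ∞ h U)
    (β : Fin n → ℕ) (j : Fin n) (l : List (Fin n)) (hjl : j ∈ l) (hnd : l.Nodup) :
    ∀ x ∈ U, foldrD (β + Pi.single j 1) l h x = foldrD β l (DD (EuclideanSpace.single j 1) h) x := by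
  induction l with
  | nil => simp at hjl
  | cons i l ih =>
    intro x hx
    rcases List.nodup_cons.1 hnd with ⟨hil, hnd'⟩
    show (DD (EuclideanSpace.single i 1))^[(β + Pi.single j 1 : Fin n → ℕ) i] (foldrD (β + Pi.single j 1) l h) x
        = (DD (EuclideanSpace.single i 1))^[β i] (foldrD β l (DD (EuclideanSpace.single j 1) h)) x
    by_cases hij : i = j
    · have hjl' : j ∉ l := hij ▸ hil
      have h1 : foldrD (β + Pi.single j 1) l h = foldrD β l h :=
        foldrD_congr_β h l (fun a ha => by
          have : j ≠ a := fun e => hjl' (e ▸ ha)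
          simp [Pi.single_eq_of_ne (Ne.symm this) 1])
      have h2 : (β + Pi.single j 1 : Fin n → ℕ) i = β i + 1 := by subst hij; simp
      rw [h1, h2, Function.iterate_succ_apply]
      subst hij
      exact iter_congr_on hU (foldrD_comm hU hh _ β l) _ (β i) x hx
    · have hjl' : j ∈ l := by
        rcases List.mem_cons.1 hjl with h' | h'
        · exact absurd h'.symm hij
        · exact h'
      have h2 : (β + Pi.single j 1 : Fin n → ℕ) i = β i := by
        simp [Pi.single_eq_of_ne hij 1]
      rw [h2]
      exact iter_congr_on hU (ih hjl' hnd') _ (β i) x hx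


lemma update_eq_add_single {n : ℕ} (β : Fin n → ℕ) (j : Fin n) :
    β + Pi.single j 1 = Function.update β j (β j + 1) := by
  funext i
  by_cases h : i = j
  · subst h; simp
  · simp [Function.update_of_ne h, Pi.single_eq_of_ne h]

lemma prod_factorial_add_single {n : ℕ} (β : Fin n → ℕ) (j : Fin n) :
    (∏ i, (((β + Pi.single j 1 : Fin n → ℕ) i).factorial : ℝ))
      = (β j + 1) * ∏ i, ((β i).factorial : ℝ) := by
  rw [update_eq_add_single]
  rw [← Finset.prod_erase_mul _ _ (Finset.mem_univ j),
      ← Finset.prod_erase_mul _ _ (Finset.mem_univ j)]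
  rw [Finset.prod_congr rfl (fun i hi => by
    rw [Function.update_of_ne (Finset.ne_of_mem_erase hi)])]
  rw [Function.update_self, Nat.factorial_succ]
  push_cast; ring

lemma multinomial_step {n : ℕ} (k : ℕ) (T : (Fin n → ℕ) → ℝ) :
    ∑ β ∈ Finset.Nat.antidiagonalTuple n k, ∑ j : Fin n,
      ((k.factorial : ℝ) / ∏ i, ((β i).factorial : ℝ)) * T (β + Pi.single j 1)
    = ∑ γ ∈ Finset.Nat.antidiagonalTuple n (k+1),
      (((k+1).factorial : ℝ) / ∏ i, ((γ i).factorial : ℝ)) * T γ := by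
  have hfac : ∀ β : Fin n → ℕ, (0:ℝ) < ∏ i, ((β i).factorial : ℝ) :=
    fun β => Finset.prod_pos fun i _ => by positivity
  have hRHS : ∀ γ ∈ Finset.Nat.antidiagonalTuple n (k+1),
      (((k+1).factorial : ℝ) / ∏ i, ((γ i).factorial : ℝ)) * T γ
      = ∑ j : Fin n, ((γ j : ℝ) * ((k.factorial : ℝ) / ∏ i, ((γ i).factorial : ℝ)) * T γ) := by
    intro γ hγ
    have hsum : ∑ j, (γ j : ℝ) = ((k:ℝ)+1) := by
      have h := Finset.Nat.mem_antidiagonalTuple.mp hγ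
      rw [← Nat.cast_sum, h]
      push_cast; ring
    rw [← Finset.sum_mul, ← Finset.sum_mul, hsum, Nat.factorial_succ]
    push_cast; ring
  rw [Finset.sum_congr rfl hRHS]
  rw [← Finset.sum_product', ← Finset.sum_product']
  rw [← Finset.sum_filter_of_ne (s := Finset.Nat.antidiagonalTuple n (k+1) ×ˢ Finset.univ)
    (p := fun p => p.1 p.2 ≠ 0) (by
      intro p _ hne hz
      apply hne
      rw [hz]
      push_cast
      ring)]
  refine Finset.sum_nbij' (i := fun p => (p.1 + Pi.single p.2 1, p.2))
    (j := fun p => (p.1 - Pi.single p.2 1, p.2)) ?_ ?_ ?_ ?_ ?_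
  · rintro ⟨β, j⟩ hp
    simp only [Finset.mem_product, Finset.Nat.mem_antidiagonalTuple] at hp ⊢
    refine Finset.mem_filter.mpr ⟨Finset.mem_product.mpr ⟨?_, Finset.mem_univ _⟩, ?_⟩
    · rw [Finset.Nat.mem_antidiagonalTuple]
      have : ∑ i, (β + Pi.single j 1 : Fin n → ℕ) i = (∑ i, β i) + ∑ i, Pi.single j (1:ℕ) i := by
        simp [Finset.sum_add_distrib]
      rw [this, hp.1]
      have : ∑ i, Pi.single j (1:ℕ) i = 1 := by
        simp [Pi.single_apply]
      rw [this]
    · simp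
  · rintro ⟨γ, j⟩ hp
    rcases Finset.mem_filter.mp hp with ⟨hp1, hne⟩
    simp only [Finset.mem_product, Finset.Nat.mem_antidiagonalTuple] at hp1
    refine Finset.mem_product.mpr ⟨?_, Finset.mem_univ _⟩
    rw [Finset.Nat.mem_antidiagonalTuple]
    show ∑ i, (γ - Pi.single j 1 : Fin n → ℕ) i = k
    have hne' : γ j ≠ 0 := hne
    have hγeq : (γ - Pi.single j 1 : Fin n → ℕ) + Pi.single j 1 = γ := by
      funext i
      by_cases h : i = j
      · subst h
        simp only [Pi.add_apply, Pi.sub_apply, Pi.single_eq_same]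
        omega
      · simp [Pi.single_eq_of_ne h]
    have h4 : ∑ i, γ i = (∑ i, (γ - Pi.single j 1 : Fin n → ℕ) i) + 1 := by
      conv_lhs => rw [← hγeq]
      simp only [Pi.add_apply]
      rw [Finset.sum_add_distrib]
      congr 1
      simp [Pi.single_apply]
    have h5 := hp1.1
    omega
  · rintro ⟨β, j⟩ _
    simp only [Prod.mk.injEq]
    constructor
    · funext i
      by_cases h : i = j
      · subst h; simp
      · simp [Pi.single_eq_of_ne h]
    · trivial
  · rintro ⟨γ, j⟩ hp
    rcases Finset.mem_filter.mp hp with ⟨_, hne⟩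
    have hne' : γ j ≠ 0 := hne
    simp only [Prod.mk.injEq]
    constructor
    · funext i
      by_cases h : i = j
      · subst h
        simp only [Pi.sub_apply, Pi.add_apply, Pi.single_eq_same]
        omega
      · simp [Pi.single_eq_of_ne h]
    · trivial
  · rintro ⟨β, j⟩ hp
    simp only
    rw [prod_factorial_add_single]
    have h1 : ((β + Pi.single j 1 : Fin n → ℕ) j : ℝ) = (β j : ℝ) + 1 := by
      push_cast [Pi.add_apply, Pi.single_eq_same]; ring
    rw [h1]
    have h2 := hfac β
    have h3 : (β j : ℝ) + 1 ≠ 0 := by positivity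
    field_simp


lemma iter_measurable {w : EuclideanSpace ℝ (Fin n)} {h : EuclideanSpace ℝ (Fin n) → ℝ}
    (hm : Measurable h) (m : ℕ) : Measurable ((DD w)^[m] h) := by
  cases m with
  | zero => exact hm
  | succ m => rw [Function.iterate_succ_apply']; exact DD_measurable _ _

lemma foldrD_measurable {h : EuclideanSpace ℝ (Fin n) → ℝ} (hm : Measurable h)
    (β : Fin n → ℕ) (l : List (Fin n)) : Measurable (foldrD β l h) := by
  induction l with
  | nil => exact hm
  | cons i l ih => exact iter_measurable ih _

lemma foldrD_zero (l : List (Fin n)) (h : EuclideanSpace ℝ (Fin n) → ℝ) :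
    foldrD 0 l h = h := by
  induction l with
  | nil => rfl
  | cons i l ih =>
    show (DD (EuclideanSpace.single i 1))^[(0 : Fin n → ℕ) i] (foldrD 0 l h) = h
    simpa using ih

lemma pIter_eq {U : Set (EuclideanSpace ℝ (Fin n))} (hU : IsOpen U)
    {G G' : EuclideanSpace ℝ (Fin n) → ℝ}
    (hG' : ContDiffOn ℝ ∞ G' U) (hGG' : ∀ y ∈ U, G y = G' y) (i : Fin n) (m : ℕ) :
    ∀ x ∈ U, (pderiv' i)^[m] G x = (DD (EuclideanSpace.single i 1))^[m] G' x := by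
  induction m with
  | zero => exact hGG'
  | succ m ih =>
    intro x hx
    rw [Function.iterate_succ_apply', Function.iterate_succ_apply']
    have hev : (pderiv' i)^[m] G =ᶠ[nhds x] (DD (EuclideanSpace.single i 1))^[m] G' := by
      filter_upwards [hU.mem_nhds hx] with y hy using ih y hy
    show lineDeriv ℝ ((pderiv' i)^[m] G) x (EuclideanSpace.single i 1) = _
    rw [hev.lineDeriv_eq]
    have hdiff : DifferentiableAt ℝ ((DD (EuclideanSpace.single i 1))^[m] G') x :=
      ((iter_contDiffOn hU hG' _ m).contDiffAt (hU.mem_nhds hx)).differentiableAt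
        (by simp)
    exact hdiff.lineDeriv_eq_fderiv

lemma multiDeriv_eq_Dm {U : Set (EuclideanSpace ℝ (Fin n))} (hU : IsOpen U)
    {F : EuclideanSpace ℝ (Fin n) → ℝ} (hF : ContDiffOn ℝ ∞ F U) (β : Fin n → ℕ) :
    ∀ x ∈ U, multiDeriv β F x = Dm β F x := by
  have H : ∀ l : List (Fin n), ∀ x ∈ U,
      (l.foldr (fun i G => (pderiv' i)^[β i] G) F) x = foldrD β l F x := by
    intro l
    induction l with
    | nil => exact fun x _ => rfl
    | cons i l ih =>
      intro x hx
      exact pIter_eq hU (foldrD_contDiffOn hU hF β l) ih i (β i) x hx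
  exact H _

lemma prod_pow_succ (s : EuclideanSpace ℝ (Fin n)) (β : Fin n → ℕ) (j : Fin n) :
    (∏ i, s i ^ β i) * s j = ∏ i, s i ^ ((β + Pi.single j 1 : Fin n → ℕ) i) := by
  simp only [update_eq_add_single β j]
  have h1 : (fun i => s i ^ ((Function.update β j (β j + 1)) i))
      = Function.update (fun i => s i ^ β i) j (s j ^ (β j + 1)) := by
    funext i
    by_cases h : i = j
    · subst h; simp
    · simp [Function.update_of_ne h]
  have h2 : ∏ i, s i ^ ((Function.update β j (β j + 1)) i)
      = ∏ i, (Function.update (fun i => s i ^ β i) j (s j ^ (β j + 1))) i :=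
    Finset.prod_congr rfl (fun i _ => congrFun h1 i)
  rw [h2, Finset.prod_update_of_mem (Finset.mem_univ j),
    ← Finset.mul_prod_erase Finset.univ (fun i => s i ^ β i) (Finset.mem_univ j),
    Finset.sdiff_singleton_eq_erase]
  ring


lemma Dm_comm {U : Set (EuclideanSpace ℝ (Fin n))} (hU : IsOpen U)
    {h : EuclideanSpace ℝ (Fin n) → ℝ} (hh : ContDiffOn ℝ ∞ h U)
    (u : EuclideanSpace ℝ (Fin n)) (β : Fin n → ℕ) {x} (hx : x ∈ U) :
    DD u (Dm β h) x = Dm β (DD u h) x := foldrD_comm hU hh u β _ x hx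

lemma Dm_insert {U : Set (EuclideanSpace ℝ (Fin n))} (hU : IsOpen U)
    {h : EuclideanSpace ℝ (Fin n) → ℝ} (hh : ContDiffOn ℝ ∞ h U)
    (β : Fin n → ℕ) (j : Fin n) {x} (hx : x ∈ U) :
    Dm (β + Pi.single j 1) h x = Dm β (DD (EuclideanSpace.single j 1) h) x :=
  foldrD_insert hU hh β j _ (List.mem_finRange j) (List.nodup_finRange n) x hx

lemma Dm_contDiffOn {U : Set (EuclideanSpace ℝ (Fin n))} (hU : IsOpen U)
    {h : EuclideanSpace ℝ (Fin n) → ℝ} (hh : ContDiffOn ℝ ∞ h U) (β : Fin n → ℕ) :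
    ContDiffOn ℝ ∞ (Dm β h) U := foldrD_contDiffOn hU hh β _

-- integrability lemma
lemma core_int {μ : Measure (EuclideanSpace ℝ (Fin n))} [IsFiniteMeasure μ]
    {S : Set (EuclideanSpace ℝ (Fin n))} (hae : ∀ᵐ s ∂μ, s ∈ S)
    {ρ : EuclideanSpace ℝ (Fin n) → ℝ}
    (hρc : ContinuousOn ρ {x : EuclideanSpace ℝ (Fin n) | x ≠ 0}) (hρm : Measurable ρ)
    {c : EuclideanSpace ℝ (Fin n) → ℝ} (hc : Continuous c)
    {e : EuclideanSpace ℝ (Fin n) → EuclideanSpace ℝ (Fin n)} (he : Continuous e)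
    {r R' : ℝ} (hr : 0 < r)
    (hin : ∀ s ∈ S, r ≤ ‖e s‖ ∧ ‖e s‖ ≤ R')
    (hcb : ∃ Cc, ∀ s ∈ S, |c s| ≤ Cc) :
    Integrable (fun s => c s * ρ (e s)) μ := by
  obtain ⟨Cc, hCc⟩ := hcb
  set A : Set (EuclideanSpace ℝ (Fin n)) := {y | r ≤ ‖y‖ ∧ ‖y‖ ≤ R'} with hA
  have hAU : A ⊆ {x : EuclideanSpace ℝ (Fin n) | x ≠ 0} := by
    intro y hy
    intro h0
    have h1 : r ≤ ‖y‖ := hy.1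
    rw [h0, norm_zero] at h1
    linarith
  have hAc : IsCompact A := annulus_compact r R'
  obtain ⟨M, hM⟩ := hAc.exists_bound_of_continuousOn (hρc.mono hAU)
  have hmeas : AEStronglyMeasurable (fun s => c s * ρ (e s)) μ :=
    (hc.measurable.mul (hρm.comp he.measurable)).aestronglyMeasurable
  refine Integrable.mono' (integrable_const (Cc * M)) hmeas ?_
  filter_upwards [hae] with s hs
  have h1 : e s ∈ A := ⟨(hin s hs).1, (hin s hs).2⟩
  have h2 : |ρ (e s)| ≤ M := hM _ h1
  have h3 : |c s| ≤ Cc := hCc s hs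
  calc ‖c s * ρ (e s)‖ = |c s| * |ρ (e s)| := abs_mul _ _
  _ ≤ Cc * M := mul_le_mul h3 h2 (abs_nonneg _) ((abs_nonneg _).trans h3)

lemma core {μ : Measure (EuclideanSpace ℝ (Fin n))} [IsFiniteMeasure μ]
    {S : Set (EuclideanSpace ℝ (Fin n))} (hae : ∀ᵐ s ∂μ, s ∈ S)
    {ρ : EuclideanSpace ℝ (Fin n) → ℝ}
    (hρ : ContDiffOn ℝ ∞ ρ {x : EuclideanSpace ℝ (Fin n) | x ≠ 0}) (hρm : Measurable ρ)
    {c : EuclideanSpace ℝ (Fin n) → ℝ} (hc : Continuous c)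
    {b w : EuclideanSpace ℝ (Fin n) → EuclideanSpace ℝ (Fin n)}
    (hb : Continuous b) (hw : Continuous w)
    {δ r R' : ℝ} (hr : 0 < r)
    (hin : ∀ s ∈ S, ∀ t : ℝ, |t| ≤ δ → r ≤ ‖b s + t • w s‖ ∧ ‖b s + t • w s‖ ≤ R')
    (hcb : ∃ Cc, ∀ s ∈ S, |c s| ≤ Cc) (hwb : ∃ Cw, ∀ s ∈ S, ‖w s‖ ≤ Cw)
    {t₀ : ℝ} (ht₀ : |t₀| < δ) :
    HasDerivAt (fun t => ∫ s, c s * ρ (b s + t • w s) ∂μ)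
      (∫ s, c s * fderiv ℝ ρ (b s + t₀ • w s) (w s) ∂μ) t₀ := by
  obtain ⟨Cc, hCc⟩ := hcb
  obtain ⟨Cw, hCw⟩ := hwb
  set U : Set (EuclideanSpace ℝ (Fin n)) := {x | x ≠ 0} with hUdef
  have hU : IsOpen U := isOpen_ne_zero
  set A : Set (EuclideanSpace ℝ (Fin n)) := {y | r ≤ ‖y‖ ∧ ‖y‖ ≤ R'} with hA
  have hAU : A ⊆ U := by
    intro y hy
    intro h0
    have h1 : r ≤ ‖y‖ := hy.1
    rw [h0, norm_zero] at h1
    linarith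
  have hAc : IsCompact A := annulus_compact r R'
  have hfc : ContinuousOn (fderiv ℝ ρ) U := hρ.continuousOn_fderiv_of_isOpen hU (by simp)
  obtain ⟨M', hM'⟩ := hAc.exists_bound_of_continuousOn (hfc.mono hAU)
  set ε : ℝ := δ - |t₀| with hε
  have hεpos : 0 < ε := by simp [hε]; linarith
  have habs : ∀ t ∈ Metric.ball t₀ ε, |t| ≤ δ := by
    intro t ht
    rw [Metric.mem_ball, Real.dist_eq] at ht
    have := abs_sub_abs_le_abs_sub t t₀
    linarith
  -- measurability of the parametrized family
  have hmeasF : ∀ t : ℝ, AEStronglyMeasurable (fun s => c s * ρ (b s + t • w s)) μ := by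
    intro t
    exact (hc.measurable.mul (hρm.comp (hb.add (hw.const_smul t)).measurable)).aestronglyMeasurable
  have hmeasF' : AEStronglyMeasurable
      (fun s => c s * fderiv ℝ ρ (b s + t₀ • w s) (w s)) μ := by
    have h1 : Measurable (fun s => (fderiv ℝ ρ (b s + t₀ • w s), w s)) :=
      ((measurable_fderiv ℝ ρ).comp (hb.add (hw.const_smul t₀)).measurable).prodMk hw.measurable
    have h2 : Measurable fun s => fderiv ℝ ρ (b s + t₀ • w s) (w s) :=
      isBoundedBilinearMap_apply.continuous.measurable.comp h1
    exact (hc.measurable.mul h2).aestronglyMeasurable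
  have hF_int : Integrable (fun s => c s * ρ (b s + t₀ • w s)) μ :=
    core_int hae hρ.continuousOn hρm hc (hb.add (hw.const_smul t₀)) hr
      (fun s hs => hin s hs t₀ (le_of_lt ht₀)) ⟨Cc, hCc⟩
  have key := hasDerivAt_integral_of_dominated_loc_of_deriv_le (μ := μ)
      (F := fun t s => c s * ρ (b s + t • w s))
      (F' := fun t s => c s * fderiv ℝ ρ (b s + t • w s) (w s))
      (bound := fun _ => Cc * (M' * Cw))
      (Metric.ball_mem_nhds t₀ hεpos) (Filter.Eventually.of_forall hmeasF) hF_int hmeasF' ?_ (integrable_const _) ?_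
  · exact key.2
  · -- bound
    filter_upwards [hae] with s hs
    intro t ht
    have h1 : b s + t • w s ∈ A := by
      have := hin s hs t (habs t ht)
      exact ⟨this.1, this.2⟩
    have h2 : ‖fderiv ℝ ρ (b s + t • w s)‖ ≤ M' := hM' _ h1
    have h3 : |fderiv ℝ ρ (b s + t • w s) (w s)| ≤ M' * Cw := by
      calc |fderiv ℝ ρ (b s + t • w s) (w s)| ≤ ‖fderiv ℝ ρ (b s + t • w s)‖ * ‖w s‖ :=
        (fderiv ℝ ρ (b s + t • w s)).le_opNorm (w s)
      _ ≤ M' * Cw := mul_le_mul h2 (hCw s hs) (norm_nonneg _) ((norm_nonneg _).trans h2)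
    calc ‖c s * fderiv ℝ ρ (b s + t • w s) (w s)‖
        = |c s| * |fderiv ℝ ρ (b s + t • w s) (w s)| := abs_mul _ _
    _ ≤ Cc * (M' * Cw) := mul_le_mul (hCc s hs) h3 (abs_nonneg _) ((abs_nonneg _).trans (hCc s hs))
  · -- differentiability
    filter_upwards [hae] with s hs
    intro t ht
    have h1 : b s + t • w s ∈ A := by
      have := hin s hs t (habs t ht)
      exact ⟨this.1, this.2⟩
    have h2 : b s + t • w s ∈ U := hAU h1
    have hρd : DifferentiableAt ℝ ρ (b s + t • w s) :=
      ((hρ.contDiffAt (hU.mem_nhds h2)).differentiableAt (by simp))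
    have hy : HasDerivAt (fun t : ℝ => b s + t • w s) (w s) t := by
      have h3 : HasDerivAt (fun t : ℝ => t • w s) ((1:ℝ) • w s) t :=
        (hasDerivAt_id t).smul_const (w s)
      rw [one_smul] at h3
      exact h3.const_add (b s)
    exact (hρd.hasFDerivAt.comp_hasDerivAt t hy).const_mul (c s)


end Stmt13

open Stmt13 in
set_option maxHeartbeats 2000000 in
/-- Let `F(ε) = -v · ∇_x [x ↦ ∫_{∂Ωⁱ} ν(s) · ∇G_n(x - ε•s) θ(s) dσ(s)](x₀)`. Then the `k`-th
derivative of `F` at `ε = 0` equals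
`(-1)^(k+1) ∑_{|β|=k} (k!/β!) v · ∇_x [x ↦ (∇D^β G_n)(x) · c_β](x₀)`, where
`c_β = ∫_{∂Ωⁱ} ν(s) s^β θ(s) dσ(s)`. -/
theorem stmt13 (n : ℕ) (hn : 2 ≤ n) (Ωi : Set (EuclideanSpace ℝ (Fin n)))
    (hΩ : IsOpen Ωi) (hb : Bornology.IsBounded Ωi)
    (hfin : IsFiniteMeasure (bdryMeasure n (frontier Ωi)))
    (ν : EuclideanSpace ℝ (Fin n) → EuclideanSpace ℝ (Fin n)) (hν : Continuous ν)
    (θ : EuclideanSpace ℝ (Fin n) → ℝ) (hθ : Continuous θ)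
    (v : EuclideanSpace ℝ (Fin n))
    (x₀ : EuclideanSpace ℝ (Fin n)) (hx₀ : x₀ ≠ 0) (k : ℕ) :
    iteratedDeriv k
        (fun ε : ℝ =>
          -lineDeriv ℝ
            (fun x => ∫ s, ⟪ν s, gradient (fundSol n) (x - ε • s)⟫ * θ s
              ∂(bdryMeasure n (frontier Ωi))) x₀ v) 0 =
      (-1 : ℝ) ^ (k + 1) * ∑ β ∈ Finset.Nat.antidiagonalTuple n k,
        ((k.factorial : ℝ) / ∏ i, ((β i).factorial : ℝ)) *
          lineDeriv ℝ
            (fun x => ⟪gradient (multiDeriv β (fundSol n)) x,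
              ∫ s, ((∏ i, s i ^ β i) * θ s) • ν s ∂(bdryMeasure n (frontier Ωi))⟫) x₀ v := by
  classical
  set U : Set (EuclideanSpace ℝ (Fin n)) := {x | x ≠ 0} with hUdef
  have hU : IsOpen U := isOpen_ne_zero
  set g : EuclideanSpace ℝ (Fin n) → ℝ := fundSol n with hgdef
  set S : Set (EuclideanSpace ℝ (Fin n)) := frontier Ωi with hSdef
  set μ : Measure (EuclideanSpace ℝ (Fin n)) := bdryMeasure n S with hμdef
  haveI hfinI : IsFiniteMeasure μ := hfin
  have hSm : MeasurableSet S := isClosed_frontier.measurableSet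
  have hae : ∀ᵐ s ∂μ, s ∈ S := by
    have hres : μ = (μH[(n : ℝ) - 1]).restrict S := by rw [hμdef]; rfl
    rw [hres]
    exact ae_restrict_mem hSm
  have hgS : ContDiffOn ℝ ∞ g U := fundSol_contDiffOn n
  have hx₀U : x₀ ∈ U := hx₀
  -- bounds on S
  have hSb : Bornology.IsBounded S := hb.closure.subset frontier_subset_closure
  have hSc : IsCompact S := Metric.isCompact_of_isClosed_isBounded isClosed_frontier hSb
  obtain ⟨RS0, hRS0⟩ := hSb.subset_closedBall 0
  set RS : ℝ := max RS0 0 with hRSdef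
  have hRSnn : 0 ≤ RS := le_max_right _ _
  have hRSb : ∀ s ∈ S, ‖s‖ ≤ RS := by
    intro s hs
    have := hRS0 hs
    rw [Metric.mem_closedBall, dist_zero_right] at this
    exact this.trans (le_max_left _ _)
  -- constants
  have hnx : (0:ℝ) < ‖x₀‖ := norm_pos_iff.mpr hx₀
  set nx : ℝ := ‖x₀‖ with hnxdef
  set δ : ℝ := nx / (4 * (RS + 1)) with hδdef
  set δ' : ℝ := nx / (4 * (‖v‖ + 1)) with hδ'def
  have hδpos : 0 < δ := by
    rw [hδdef]
    apply div_pos hnx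
    nlinarith
  have hδ'pos : 0 < δ' := by
    rw [hδ'def]
    apply div_pos hnx
    nlinarith [norm_nonneg v]
  set r : ℝ := nx / 2 with hrdef
  set R' : ℝ := 2 * nx with hR'def
  have hrpos : 0 < r := by rw [hrdef]; linarith
  -- geometry
  have hgeo : ∀ s ∈ S, ∀ ε t : ℝ, |ε| ≤ δ → |t| ≤ δ' →
      r ≤ ‖x₀ - ε • s + t • v‖ ∧ ‖x₀ - ε • s + t • v‖ ≤ R' := by
    intro s hs ε t hε ht
    have hsn : ‖s‖ ≤ RS := hRSb s hs
    have hδR : δ * (RS + 1) = nx / 4 := by rw [hδdef]; field_simp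
    have hδ'v : δ' * (‖v‖ + 1) = nx / 4 := by rw [hδ'def]; field_simp
    have h1 : ‖ε • s‖ ≤ nx / 4 := by
      rw [norm_smul, Real.norm_eq_abs]
      calc |ε| * ‖s‖ ≤ δ * (RS + 1) :=
        mul_le_mul hε (by linarith) (norm_nonneg _) hδpos.le
      _ = nx / 4 := hδR
    have h2 : ‖t • v‖ ≤ nx / 4 := by
      rw [norm_smul, Real.norm_eq_abs]
      calc |t| * ‖v‖ ≤ δ' * (‖v‖ + 1) :=
        mul_le_mul ht (by linarith) (norm_nonneg _) hδ'pos.le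
      _ = nx / 4 := hδ'v
    constructor
    · have h3 := norm_add_le (x₀ - ε • s + t • v) (ε • s - t • v)
      have h4 : (x₀ - ε • s + t • v) + (ε • s - t • v) = x₀ := by abel
      rw [h4] at h3
      have h5 := norm_sub_le (ε • s) (t • v)
      have : nx ≤ ‖x₀ - ε • s + t • v‖ + (nx / 4 + nx / 4) := by
        calc nx = ‖x₀‖ := rfl
        _ ≤ ‖x₀ - ε • s + t • v‖ + ‖ε • s - t • v‖ := h3
        _ ≤ _ := by linarith
      rw [hrdef]; linarith
    · have h3 := norm_add_le (x₀ - ε • s) (t • v)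
      have h4 := norm_sub_le x₀ (ε • s)
      rw [hR'def]
      calc ‖x₀ - ε • s + t • v‖ ≤ ‖x₀ - ε • s‖ + ‖t • v‖ := h3
      _ ≤ (‖x₀‖ + ‖ε • s‖) + ‖t • v‖ := by linarith
      _ ≤ 2 * nx := by
          have : ‖x₀‖ = nx := rfl
          linarith
  -- bounds for continuous functions on S
  have hbound_c : ∀ c : EuclideanSpace ℝ (Fin n) → ℝ, Continuous c →
      ∃ C, ∀ s ∈ S, |c s| ≤ C := by
    intro c hc
    obtain ⟨C, hC⟩ := hSc.exists_bound_of_continuousOn hc.continuousOn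
    exact ⟨C, fun s hs => by simpa [Real.norm_eq_abs] using hC s hs⟩
  -- integrability master lemma
  have hmaster_int : ∀ c : EuclideanSpace ℝ (Fin n) → ℝ, Continuous c →
      ∀ ρ : EuclideanSpace ℝ (Fin n) → ℝ, ContDiffOn ℝ ∞ ρ U → Measurable ρ →
      ∀ ε : ℝ, |ε| ≤ δ → Integrable (fun s => c s * ρ (x₀ - ε • s)) μ := by
    intro c hc ρ hρ hρm ε hε
    refine core_int (R' := R') hae hρ.continuousOn hρm hc
      (continuous_const.sub (continuous_id.const_smul ε)) hrpos ?_ (hbound_c c hc)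
    intro s hs
    have h := hgeo s hs ε 0 hε (by simpa using hδ'pos.le)
    simpa using h
  have hmaster_int2 : ∀ c : EuclideanSpace ℝ (Fin n) → ℝ, Continuous c →
      ∀ ρ : EuclideanSpace ℝ (Fin n) → ℝ, ContDiffOn ℝ ∞ ρ U → Measurable ρ →
      ∀ ε t : ℝ, |ε| ≤ δ → |t| ≤ δ' →
      Integrable (fun s => c s * ρ (x₀ + t • v - ε • s)) μ := by
    intro c hc ρ hρ hρm ε t hε ht
    refine core_int (R' := R') hae hρ.continuousOn hρm hc
      ((continuous_const.add continuous_const).sub (continuous_id.const_smul ε)) hrpos ?_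
      (hbound_c c hc)
    intro s hs
    have h := hgeo s hs ε t hε ht
    have heq : x₀ + t • v - ε • s = x₀ - ε • s + t • v := by abel
    rw [heq]
    exact h
  -- derivative in ε master lemma
  have hmaster1 : ∀ c : EuclideanSpace ℝ (Fin n) → ℝ, Continuous c →
      ∀ ρ : EuclideanSpace ℝ (Fin n) → ℝ, ContDiffOn ℝ ∞ ρ U → Measurable ρ →
      ∀ ε : ℝ, |ε| < δ →
      HasDerivAt (fun e : ℝ => ∫ s, c s * ρ (x₀ - e • s) ∂μ)
        (∫ s, c s * fderiv ℝ ρ (x₀ - ε • s) (-s) ∂μ) ε := by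
    intro c hc ρ hρ hρm ε hε
    have h := core (S := S) hae hρ hρm hc
      (b := fun _ => x₀) (w := fun s => -s) continuous_const continuous_neg
      (δ := δ) (r := r) (R' := R') hrpos ?_ (hbound_c c hc)
      ⟨RS, fun s hs => by simpa using hRSb s hs⟩ (t₀ := ε) hε
    · have heqf : (fun t : ℝ => ∫ s, c s * ρ (x₀ + t • (-s)) ∂μ)
          = (fun e : ℝ => ∫ s, c s * ρ (x₀ - e • s) ∂μ) := by
        funext t
        congr 1
        funext s
        rw [show x₀ + t • (-s) = x₀ - t • s by rw [smul_neg]; abel]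
      have heqv : (∫ s, c s * fderiv ℝ ρ (x₀ + ε • (-s)) (-s) ∂μ)
          = ∫ s, c s * fderiv ℝ ρ (x₀ - ε • s) (-s) ∂μ := by
        congr 1
        funext s
        rw [show x₀ + ε • (-s) = x₀ - ε • s by rw [smul_neg]; abel]
      rw [heqf, heqv] at h
      exact h
    · intro s hs t ht
      have h := hgeo s hs t 0 ht (by simpa using hδ'pos.le)
      have heq : x₀ + t • (-s) = x₀ - t • s + (0:ℝ) • v := by
        rw [smul_neg, zero_smul]; abel
      rw [heq]
      simpa using h
  -- derivative in t (line direction) master lemma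
  have hmaster2 : ∀ c : EuclideanSpace ℝ (Fin n) → ℝ, Continuous c →
      ∀ ρ : EuclideanSpace ℝ (Fin n) → ℝ, ContDiffOn ℝ ∞ ρ U → Measurable ρ →
      ∀ ε : ℝ, |ε| ≤ δ →
      HasDerivAt (fun t : ℝ => ∫ s, c s * ρ (x₀ + t • v - ε • s) ∂μ)
        (∫ s, c s * DD v ρ (x₀ - ε • s) ∂μ) 0 := by
    intro c hc ρ hρ hρm ε hε
    have h := core (S := S) hae hρ hρm hc
      (b := fun s => x₀ - ε • s) (w := fun _ => v)
      (continuous_const.sub (continuous_id.const_smul ε)) continuous_const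
      (δ := δ') (r := r) (R' := R') hrpos
      (fun s hs t ht => hgeo s hs ε t hε ht)
      (hbound_c c hc) ⟨‖v‖, fun s _ => le_rfl⟩ (t₀ := 0) (by simpa using hδ'pos)
    have heqf : (fun t : ℝ => ∫ s, c s * ρ (x₀ - ε • s + t • v) ∂μ)
        = (fun t : ℝ => ∫ s, c s * ρ (x₀ + t • v - ε • s) ∂μ) := by
      funext t
      congr 1
      funext s
      rw [show x₀ - ε • s + t • v = x₀ + t • v - ε • s by abel]
    have heqv : (∫ s, c s * fderiv ℝ ρ (x₀ - ε • s + (0:ℝ) • v) v ∂μ)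
        = ∫ s, c s * DD v ρ (x₀ - ε • s) ∂μ := by
      congr 1
      funext s
      rw [show x₀ - ε • s + (0:ℝ) • v = x₀ - ε • s by rw [zero_smul]; abel]
      rfl
    rw [heqf, heqv] at h
    exact h
  -- main players
  set q : Fin n → EuclideanSpace ℝ (Fin n) → ℝ :=
    fun i => DD v (DD (EuclideanSpace.single i 1) g) with hqdef
  have hqs : ∀ i, ContDiffOn ℝ ∞ (q i) U :=
    fun i => DD_contDiffOn hU (DD_contDiffOn hU hgS _) _
  have hqm : ∀ i, Measurable (q i) := fun i => DD_measurable _ _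
  have hDms : ∀ (β : Fin n → ℕ) (i : Fin n), ContDiffOn ℝ ∞ (Dm β (q i)) U :=
    fun β i => foldrD_contDiffOn hU (hqs i) β _
  have hDmm : ∀ (β : Fin n → ℕ) (i : Fin n), Measurable (Dm β (q i)) :=
    fun β i => foldrD_measurable (hqm i) β _
  have happ : ∀ i : Fin n, Continuous fun s : EuclideanSpace ℝ (Fin n) => (ν s) i :=
    fun i => (EuclideanSpace.proj (𝕜 := ℝ) i).continuous.comp hν
  have hscoord : ∀ j : Fin n, Continuous fun s : EuclideanSpace ℝ (Fin n) => s j :=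
    fun j => (EuclideanSpace.proj (𝕜 := ℝ) j).continuous
  have hccont : ∀ (β : Fin n → ℕ) (i : Fin n),
      Continuous fun s : EuclideanSpace ℝ (Fin n) => θ s * (ν s) i * ∏ j, s j ^ β j :=
    fun β i => (hθ.mul (happ i)).mul
      (continuous_finset_prod _ fun j _ => (hscoord j).pow (β j))
  set J : (Fin n → ℕ) → Fin n → ℝ → ℝ := fun β i e =>
    ∫ s, (θ s * (ν s) i * ∏ j, s j ^ β j) * Dm β (q i) (x₀ - e • s) ∂μ with hJdef
  -- pointwise integrand identity
  have hint_eq : ∀ (x : EuclideanSpace ℝ (Fin n)) (e : ℝ) (s : EuclideanSpace ℝ (Fin n)),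
      ⟪ν s, gradient g (x - e • s)⟫ * θ s
        = ∑ i, (θ s * (ν s) i) * DD (EuclideanSpace.single i 1) g (x - e • s) := by
    intro x e s
    rw [real_inner_comm, inner_gradient, fderiv_expand, Finset.sum_mul]
    exact Finset.sum_congr rfl fun i _ => by simp only [DD]; ring
  -- the base case computation
  have base : ∀ e : ℝ, |e| ≤ δ →
      lineDeriv ℝ (fun x => ∫ s, ⟪ν s, gradient g (x - e • s)⟫ * θ s ∂μ) x₀ v
        = ∑ i, J 0 i e := by
    intro e he
    have hders : ∀ i ∈ (Finset.univ : Finset (Fin n)), HasDerivAt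
        (fun t : ℝ => ∫ s,
          (θ s * (ν s) i) * DD (EuclideanSpace.single i 1) g (x₀ + t • v - e • s) ∂μ)
        (∫ s, (θ s * (ν s) i) * q i (x₀ - e • s) ∂μ) 0 := by
      intro i _
      exact hmaster2 (fun s => θ s * (ν s) i) (hθ.mul (happ i))
        (DD (EuclideanSpace.single i 1) g) (DD_contDiffOn hU hgS _) (DD_measurable _ _) e he
    have hsum := HasDerivAt.fun_sum hders
    have hev : (fun t : ℝ => ∫ s, ⟪ν s, gradient g ((x₀ + t • v) - e • s)⟫ * θ s ∂μ)
        =ᶠ[nhds (0:ℝ)] (fun t : ℝ => ∑ i, ∫ s,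
          (θ s * (ν s) i) * DD (EuclideanSpace.single i 1) g (x₀ + t • v - e • s) ∂μ) := by
      filter_upwards [Metric.ball_mem_nhds (0:ℝ) hδ'pos] with t ht
      have ht' : |t| ≤ δ' := by
        rw [Metric.mem_ball, Real.dist_eq, sub_zero] at ht; exact ht.le
      have h1 : (fun s => ⟪ν s, gradient g ((x₀ + t • v) - e • s)⟫ * θ s)
          = fun s => ∑ i, (θ s * (ν s) i) *
              DD (EuclideanSpace.single i 1) g (x₀ + t • v - e • s) := by
        funext s; exact hint_eq _ e s
      rw [h1]
      exact integral_finset_sum _ fun i _ =>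
        hmaster_int2 (fun s => θ s * (ν s) i) (hθ.mul (happ i)) _
          (DD_contDiffOn hU hgS _) (DD_measurable _ _) e t he ht'
    have hld : lineDeriv ℝ (fun x => ∫ s, ⟪ν s, gradient g (x - e • s)⟫ * θ s ∂μ) x₀ v
        = deriv (fun t : ℝ => ∫ s, ⟪ν s, gradient g ((x₀ + t • v) - e • s)⟫ * θ s ∂μ) 0 := rfl
    rw [hld, hev.deriv_eq, hsum.deriv]
    refine Finset.sum_congr rfl fun i _ => ?_
    have hDm0 : Dm (0 : Fin n → ℕ) (q i) = q i := foldrD_zero _ _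
    rw [hJdef]
    simp only [hDm0, Pi.zero_apply, pow_zero, Finset.prod_const_one, mul_one]
  -- the key induction
  have habs0 : |(0:ℝ)| < δ := by simpa using hδpos
  have key : ∀ k' : ℕ, ∀ e : ℝ, |e| < δ →
      iteratedDeriv k' (fun ε : ℝ =>
          -lineDeriv ℝ (fun x => ∫ s, ⟪ν s, gradient g (x - ε • s)⟫ * θ s ∂μ) x₀ v) e
        = (-1:ℝ)^(k'+1) * ∑ β ∈ Finset.Nat.antidiagonalTuple n k',
            ((k'.factorial : ℝ) / ∏ i, ((β i).factorial : ℝ)) * ∑ i, J β i e := by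
    intro k'
    induction k' with
    | zero =>
      intro e he
      rw [iteratedDeriv_zero, Finset.Nat.antidiagonalTuple_zero_right, Finset.sum_singleton,
        base e he.le]
      have h1 : (∏ i, (((0 : Fin n → ℕ) i).factorial : ℝ)) = 1 := by simp
      rw [h1]
      norm_num
    | succ k' ih =>
      intro e he
      rw [iteratedDeriv_succ]
      have hball : Metric.ball (0:ℝ) δ ∈ nhds e :=
        Metric.isOpen_ball.mem_nhds (by rwa [Metric.mem_ball, Real.dist_eq, sub_zero])
      have hev : iteratedDeriv k' (fun ε : ℝ =>
          -lineDeriv ℝ (fun x => ∫ s, ⟪ν s, gradient g (x - ε • s)⟫ * θ s ∂μ) x₀ v)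
          =ᶠ[nhds e] (fun e' => (-1:ℝ)^(k'+1) * ∑ β ∈ Finset.Nat.antidiagonalTuple n k',
            ((k'.factorial : ℝ) / ∏ i, ((β i).factorial : ℝ)) * ∑ i, J β i e') := by
        filter_upwards [hball] with e' he'
        exact ih e' (by rwa [Metric.mem_ball, Real.dist_eq, sub_zero] at he')
      rw [hev.deriv_eq]
      have hJd : ∀ β ∈ Finset.Nat.antidiagonalTuple n k', ∀ i ∈ (Finset.univ : Finset (Fin n)),
          HasDerivAt (J β i) (-∑ j, J (β + Pi.single j 1) i e) e := by
        intro β _ i _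
        have h0 := hmaster1 (fun s => θ s * (ν s) i * ∏ j, s j ^ β j) (hccont β i)
          (Dm β (q i)) (hDms β i) (hDmm β i) e he
        have hval : (∫ s, (θ s * (ν s) i * ∏ j, s j ^ β j) *
              fderiv ℝ (Dm β (q i)) (x₀ - e • s) (-s) ∂μ)
            = -∑ j, J (β + Pi.single j 1) i e := by
          have hinteg : ∀ s : EuclideanSpace ℝ (Fin n),
              (θ s * (ν s) i * ∏ j, s j ^ β j) * fderiv ℝ (Dm β (q i)) (x₀ - e • s) (-s)
              = -∑ j, ((θ s * (ν s) i * ∏ j', s j' ^ β j') * s j) *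
                  DD (EuclideanSpace.single j 1) (Dm β (q i)) (x₀ - e • s) := by
            intro s
            rw [map_neg, fderiv_expand, mul_neg, Finset.mul_sum]
            congr 1
            exact Finset.sum_congr rfl fun j _ => by simp only [DD]; ring
          simp only [hinteg]
          rw [integral_neg]
          rw [integral_finset_sum _ (fun j _ => hmaster_int (fun s => (θ s * (ν s) i * ∏ j', s j' ^ β j') * s j) ((hccont β i).mul (hscoord j)) _
            (DD_contDiffOn hU (hDms β i) _) (DD_measurable _ _) e he.le)]
          congr 1
          refine Finset.sum_congr rfl fun j _ => ?_
          refine integral_congr_ae ?_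
          filter_upwards [hae] with s hs
          have hyU : x₀ - e • s ∈ U := by
            have h := (hgeo s hs e 0 he.le (by simpa using hδ'pos.le)).1
            simp only [zero_smul, add_zero] at h
            show x₀ - e • s ≠ 0
            intro h0
            rw [h0, norm_zero] at h
            linarith
          have hcomm : DD (EuclideanSpace.single j 1) (Dm β (q i)) (x₀ - e • s)
              = Dm (β + Pi.single j 1) (q i) (x₀ - e • s) := by
            rw [Dm_comm hU (hqs i) _ β hyU]
            exact (Dm_insert hU (hqs i) β j hyU).symm
          rw [hcomm]
          have hc2 : (θ s * (ν s) i * ∏ j', s j' ^ β j') * s j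
              = θ s * (ν s) i * ∏ j', s j' ^ ((β + Pi.single j 1 : Fin n → ℕ) j') := by
            rw [mul_assoc, prod_pow_succ]
          rw [hc2]
        exact hval ▸ h0
      have hG : HasDerivAt (fun e' => (-1:ℝ)^(k'+1) * ∑ β ∈ Finset.Nat.antidiagonalTuple n k',
            ((k'.factorial : ℝ) / ∏ i, ((β i).factorial : ℝ)) * ∑ i, J β i e')
          ((-1:ℝ)^(k'+1) * ∑ β ∈ Finset.Nat.antidiagonalTuple n k',
            ((k'.factorial : ℝ) / ∏ i, ((β i).factorial : ℝ)) *
              ∑ i, (-∑ j, J (β + Pi.single j 1) i e)) e := by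
        refine HasDerivAt.const_mul _ ?_
        refine HasDerivAt.fun_sum fun β hβ => ?_
        refine HasDerivAt.const_mul _ ?_
        exact HasDerivAt.fun_sum fun i hi => hJd β hβ i hi
      rw [hG.deriv]
      have h2 : ∀ β ∈ Finset.Nat.antidiagonalTuple n k',
          ((k'.factorial : ℝ) / ∏ i, ((β i).factorial : ℝ)) *
              ∑ i, (-∑ j, J (β + Pi.single j 1) i e)
          = -(∑ j, ((k'.factorial : ℝ) / ∏ i, ((β i).factorial : ℝ)) *
              ∑ i, J (β + Pi.single j 1) i e) := by
        intro β _
        rw [Finset.sum_neg_distrib, Finset.sum_comm, mul_neg, Finset.mul_sum]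
      rw [Finset.sum_congr rfl h2, Finset.sum_neg_distrib]
      rw [multinomial_step k' (fun γ => ∑ i, J γ i e)]
      rw [pow_succ]
      ring
  -- finish: evaluate at 0 and identify with the RHS
  rw [key k 0 habs0]
  congr 1
  refine Finset.sum_congr rfl fun β hβ => ?_
  congr 1
  -- goal : ∑ i, J β i 0 = lineDeriv ℝ (fun x => ⟪gradient (multiDeriv β g) x, cβ⟫) x₀ v
  have hcβcont : Continuous fun s : EuclideanSpace ℝ (Fin n) =>
      ((∏ j, s j ^ β j) * θ s) • ν s :=
    ((continuous_finset_prod _ fun j _ => (hscoord j).pow (β j)).mul hθ).smul hν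
  have hcβint : Integrable (fun s : EuclideanSpace ℝ (Fin n) =>
      ((∏ j, s j ^ β j) * θ s) • ν s) μ := by
    obtain ⟨C, hC⟩ := hSc.exists_bound_of_continuousOn hcβcont.continuousOn
    refine Integrable.mono' (integrable_const C) hcβcont.aestronglyMeasurable ?_
    filter_upwards [hae] with s hs using hC s hs
  set cb : EuclideanSpace ℝ (Fin n) := ∫ s, ((∏ j, s j ^ β j) * θ s) • ν s ∂μ with hcbdef
  have hproj : ∀ i : Fin n, cb i = ∫ s, (θ s * (ν s) i * ∏ j, s j ^ β j) ∂μ := by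
    intro i
    have h := (EuclideanSpace.proj (𝕜 := ℝ) i).integral_comp_comm hcβint
    have h1 : cb i = EuclideanSpace.proj (𝕜 := ℝ) i cb := rfl
    rw [h1, ← h]
    refine integral_congr_ae (Filter.Eventually.of_forall fun s => ?_)
    show ((∏ j, s j ^ β j) * θ s) • ν s i = θ s * (ν s) i * ∏ j, s j ^ β j
    simp only [smul_eq_mul]
    ring
  have hfun : (fun x => ⟪gradient (multiDeriv β g) x, cb⟫)
      =ᶠ[nhds x₀] (fun x => ∑ i, cb i * DD (EuclideanSpace.single i 1) (Dm β g) x) := by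
    filter_upwards [hU.mem_nhds hx₀U] with x hx
    rw [inner_gradient]
    have hfd : fderiv ℝ (multiDeriv β g) x = fderiv ℝ (Dm β g) x := by
      apply Filter.EventuallyEq.fderiv_eq
      filter_upwards [hU.mem_nhds hx] with y hy using multiDeriv_eq_Dm hU hgS β y hy
    rw [hfd, fderiv_expand]
    rfl
  rw [hfun.lineDeriv_eq]
  have hdiffs : ∀ i : Fin n,
      DifferentiableAt ℝ (DD (EuclideanSpace.single i 1) (Dm β g)) x₀ := fun i =>
    ((DD_contDiffOn hU (Dm_contDiffOn hU hgS β) _).contDiffAt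
      (hU.mem_nhds hx₀U)).differentiableAt (by simp)
  have hfd2 : HasFDerivAt (fun x => ∑ i, cb i * DD (EuclideanSpace.single i 1) (Dm β g) x)
      (∑ i, cb i • fderiv ℝ (DD (EuclideanSpace.single i 1) (Dm β g)) x₀) x₀ :=
    HasFDerivAt.fun_sum fun i _ => ((hdiffs i).hasFDerivAt).const_mul (cb i)
  rw [hfd2.differentiableAt.lineDeriv_eq_fderiv, hfd2.fderiv, ContinuousLinearMap.sum_apply]
  refine Finset.sum_congr rfl fun i _ => ?_
  -- J β i 0 = (cb i • fderiv …) v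
  have hJ0 : J β i 0 = (∫ s, (θ s * (ν s) i * ∏ j, s j ^ β j) ∂μ) * Dm β (q i) x₀ := by
    rw [hJdef]
    simp only [zero_smul, sub_zero]
    exact integral_mul_const _ _
  have hDD : fderiv ℝ (DD (EuclideanSpace.single i 1) (Dm β g)) x₀ v = Dm β (q i) x₀ := by
    show DD v (DD (EuclideanSpace.single i 1) (Dm β g)) x₀ = _
    rw [DD_congr_on hU (fun y hy => Dm_comm hU hgS (EuclideanSpace.single i 1) β hy) hx₀U v]
    rw [Dm_comm hU (DD_contDiffOn hU hgS _) v β hx₀U]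
  rw [hJ0, ContinuousLinearMap.smul_apply, hDD, hproj i, smul_eq_mul]
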